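/- arXiv:2112.08716 — 3 statements merged into one kernel-verified Lean document; each statement's English description precedes it below -/
import Mathlib

section
/- Let L₁,…,L_n be commuting formal variables (elements of a commutative ring with the relevant elements invertible), and define S_n = Σ over nonempty subsets {j₁ > j₂ > ⋯ > j_l} of {1,…,n} with consecutive gaps j_m − j_{m+1} ≥ 2 of (−1)^{l+1} L_{j₁}⋯L_{j_l}. Then (1−L₁)(1−L₂)(1 − S'_{n}) = 1 − S_n, where S'_n is the corresponding sum for the modified loops L'₂ = L₁L₂/((1−L₁)(1−L₂)), L'₃ = L₃/(1−L₂), and L'_k = L_k for 4 ≤ k ≤ n (with S'_n summing over nonadjacent subsets of {2,…,n}). -/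
open Finset in
/-- The inclusion–exclusion loop sum `S = Σ (−1)^{l+1} L_{j₁}⋯L_{j_l}` over nonempty
subsets `{j₁ > ⋯ > j_l}` of `{lo,…,n}` with no two consecutive indices. -/
def loopSum {R : Type*} [CommRing R] (L : ℕ → R) (lo n : ℕ) : R :=
  ∑ S ∈ ((Finset.Icc lo n).powerset).filter
      (fun S => S.Nonempty ∧ ∀ j ∈ S, j + 1 ∉ S),
    (-1 : R) ^ (S.card + 1) * ∏ j ∈ S, L j

open Finset

lemma loopSum_congr {R : Type*} [CommRing R] (L L' : ℕ → R) (lo n : ℕ)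
    (h : ∀ j ∈ Icc lo n, L j = L' j) : loopSum L lo n = loopSum L' lo n := by
  unfold loopSum
  refine Finset.sum_congr rfl fun S hS => ?_
  simp only [mem_filter, mem_powerset] at hS
  rw [Finset.prod_congr rfl fun j hj => h j (hS.1 hj)]

lemma loopSum_rec {R : Type*} [CommRing R] (L : ℕ → R) (lo n : ℕ) (h : lo ≤ n) :
    loopSum L lo n = L lo + loopSum L (lo+1) n - L lo * loopSum L (lo+2) n := by
  classical
  unfold loopSum
  rw [← Finset.sum_filter_add_sum_filter_not _ (fun S => lo ∈ S)]
  have h1 : ((Icc lo n).powerset.filter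
      (fun S => S.Nonempty ∧ ∀ j ∈ S, j + 1 ∉ S)).filter (fun S => lo ∉ S)
      = (Icc (lo+1) n).powerset.filter (fun S => S.Nonempty ∧ ∀ j ∈ S, j + 1 ∉ S) := by
    ext S
    simp only [mem_filter, mem_powerset]
    constructor
    · rintro ⟨⟨hsub, hne, hadj⟩, hlo⟩
      refine ⟨fun j hj => ?_, hne, hadj⟩
      have := hsub hj
      simp only [mem_Icc] at this ⊢
      have : j ≠ lo := fun hh => hlo (hh ▸ hj)
      omega
    · rintro ⟨hsub, hne, hadj⟩
      refine ⟨⟨fun j hj => ?_, hne, hadj⟩, fun hlo => ?_⟩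
      · have := hsub hj; simp only [mem_Icc] at this ⊢; omega
      · have := hsub hlo; simp only [mem_Icc] at this; omega
  have h2 : ∑ S ∈ ((Icc lo n).powerset.filter
      (fun S => S.Nonempty ∧ ∀ j ∈ S, j + 1 ∉ S)).filter (fun S => lo ∈ S),
      ((-1 : R) ^ (S.card + 1) * ∏ j ∈ S, L j)
      = ∑ T ∈ (Icc (lo+2) n).powerset.filter (fun S => ∀ j ∈ S, j + 1 ∉ S),
        ((-1 : R) ^ T.card * (L lo * ∏ j ∈ T, L j)) := by
    refine Finset.sum_nbij' (fun S => S.erase lo) (fun T => insert lo T) ?_ ?_ ?_ ?_ ?_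
    · intro S hS
      simp only [mem_filter, mem_powerset] at hS ⊢
      obtain ⟨⟨hsub, hne, hadj⟩, hlo⟩ := hS
      constructor
      · intro j hj
        rw [mem_erase] at hj
        have hj2 := hsub hj.2
        simp only [mem_Icc] at hj2 ⊢
        have : j ≠ lo + 1 := by
          rintro rfl; exact hadj lo hlo hj.2
        have := hj.1; omega
      · intro j hj; rw [mem_erase] at hj
        intro hc; exact hadj j hj.2 (mem_of_mem_erase hc)
    · intro T hT
      simp only [mem_filter, mem_powerset] at hT ⊢
      obtain ⟨hsub, hadj⟩ := hT
      have hloT : lo ∉ T := fun hc => by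
        have := hsub hc; simp only [mem_Icc] at this; omega
      refine ⟨⟨?_, ⟨lo, mem_insert_self _ _⟩, ?_⟩, mem_insert_self _ _⟩
      · intro j hj
        rcases mem_insert.mp hj with rfl | hj
        · simp only [mem_Icc]; omega
        · have := hsub hj; simp only [mem_Icc] at this ⊢; omega
      · intro j hj hc
        rcases mem_insert.mp hj with rfl | hj
        · rcases mem_insert.mp hc with h' | h'
          · omega
          · have := hsub h'; simp only [mem_Icc] at this; omega
        · rcases mem_insert.mp hc with h' | h'
          · have := hsub hj; simp only [mem_Icc] at this; omega
          · exact hadj j hj h'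
    · intro S hS
      simp only [mem_filter] at hS
      exact Finset.insert_erase hS.2
    · intro T hT
      simp only [mem_filter, mem_powerset] at hT
      have hloT : lo ∉ T := fun hc => by
        have := hT.1 hc; simp only [mem_Icc] at this; omega
      exact Finset.erase_insert hloT
    · intro S hS
      simp only [mem_filter, mem_powerset] at hS
      obtain ⟨⟨hsub, hne, hadj⟩, hlo⟩ := hS
      have hcard : S.card = (S.erase lo).card + 1 := by
        rw [Finset.card_erase_of_mem hlo]
        have : 1 ≤ S.card := Finset.card_pos.mpr hne
        omega
      rw [hcard, ← Finset.prod_erase_mul S L hlo]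
      ring
  rw [h1, h2]
  have h3 : ∑ T ∈ (Icc (lo+2) n).powerset.filter (fun S => ∀ j ∈ S, j + 1 ∉ S),
      ((-1 : R) ^ T.card * (L lo * ∏ j ∈ T, L j))
      = L lo * (1 - ∑ S ∈ ((Icc (lo+2) n).powerset).filter
          (fun S => S.Nonempty ∧ ∀ j ∈ S, j + 1 ∉ S),
        (-1 : R) ^ (S.card + 1) * ∏ j ∈ S, L j) := by
    rw [← Finset.sum_filter_add_sum_filter_not
      ((Icc (lo+2) n).powerset.filter (fun S => ∀ j ∈ S, j + 1 ∉ S)) (fun S => S.Nonempty)]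
    have e1 : ((Icc (lo+2) n).powerset.filter (fun S => ∀ j ∈ S, j + 1 ∉ S)).filter
        (fun S => ¬S.Nonempty) = {∅} := by
      ext S
      simp only [mem_filter, mem_powerset, mem_singleton, Finset.not_nonempty_iff_eq_empty]
      constructor
      · rintro ⟨_, h⟩; exact h
      · rintro rfl; simp
    have e2 : ((Icc (lo+2) n).powerset.filter (fun S => ∀ j ∈ S, j + 1 ∉ S)).filter
        (fun S => S.Nonempty)
        = (Icc (lo+2) n).powerset.filter (fun S => S.Nonempty ∧ ∀ j ∈ S, j + 1 ∉ S) := by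
      rw [Finset.filter_filter]
      exact Finset.filter_congr (fun S _ => by tauto)
    rw [e1, e2, Finset.sum_singleton]
    simp only [Finset.card_empty, pow_zero, Finset.prod_empty, mul_one]
    have : ∀ T : Finset ℕ, (-1 : R) ^ T.card * (L lo * ∏ j ∈ T, L j)
        = L lo * -((-1 : R) ^ (T.card + 1) * ∏ j ∈ T, L j) := by
      intro T; ring
    rw [Finset.sum_congr rfl (fun T _ => this T), ← Finset.mul_sum,
      Finset.sum_neg_distrib]
    ring
  rw [h3]
  ring

theorem loop_inductive_step {R : Type*} [CommRing R] (n : ℕ) (hn : 3 ≤ n)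
    (L : ℕ → R) (u v : R) (hu : (1 - L 1) * u = 1) (hv : (1 - L 2) * v = 1) :
    (1 - L 1) * (1 - L 2) *
        (1 - loopSum (fun k => if k = 2 then L 1 * L 2 * (u * v)
            else if k = 3 then L 3 * v else L k) 2 n)
      = 1 - loopSum L 1 n := by
  set L' : ℕ → R := fun k => if k = 2 then L 1 * L 2 * (u * v)
      else if k = 3 then L 3 * v else L k with hL'
  have h4 : loopSum L' 4 n = loopSum L 4 n := by
    refine loopSum_congr _ _ _ _ fun j hj => ?_
    simp only [mem_Icc] at hj
    simp only [hL']
    rw [if_neg (by omega), if_neg (by omega)]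
  have h5 : loopSum L' 5 n = loopSum L 5 n := by
    refine loopSum_congr _ _ _ _ fun j hj => ?_
    simp only [mem_Icc] at hj
    simp only [hL']
    rw [if_neg (by omega), if_neg (by omega)]
  rw [loopSum_rec L' 2 n (by omega), loopSum_rec L' 3 n (by omega),
      loopSum_rec L 1 n (by omega), loopSum_rec L 2 n (by omega),
      loopSum_rec L 3 n (by omega)]
  norm_num [hL']
  rw [h4, h5]
  set a := loopSum L 4 n
  set b := loopSum L 5 n
  linear_combination (L 1 * L 2 * (a - 1)) * hu
    + (L 1 * L 2 * (a - 1) * (1 - L 1) * u + (1 - L 1) * L 3 * (b - 1)) * hv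
end

section
/- For real t > 0 and real x, the series Σ_{k=0}^∞ (3^k/2^{2k+3}) Σ_{ℓ=0}^k C(k,ℓ)(−1)^ℓ (1/12^ℓ) (2/(e^{t/5}+1))^{2k+2ℓ+3} e^{(k+ℓ+x)t/5} converges and equals (e^{2t/5} − 1)/(e^t − 1) · e^{tx/5}. -/
theorem bessel_gen_fun_series (t x : ℝ) (ht : 0 < t) :
    Summable (fun k : ℕ => (3 : ℝ) ^ k / 2 ^ (2 * k + 3) *
        ∑ ℓ ∈ Finset.range (k + 1),
          (k.choose ℓ : ℝ) * (-1 : ℝ) ^ ℓ * (1 / 12 ^ ℓ) *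
            (2 / (Real.exp (t / 5) + 1)) ^ (2 * k + 2 * ℓ + 3) *
            Real.exp ((k + ℓ + x) * t / 5)) ∧
    ∑' k : ℕ, (3 : ℝ) ^ k / 2 ^ (2 * k + 3) *
        ∑ ℓ ∈ Finset.range (k + 1),
          (k.choose ℓ : ℝ) * (-1 : ℝ) ^ ℓ * (1 / 12 ^ ℓ) *
            (2 / (Real.exp (t / 5) + 1)) ^ (2 * k + 2 * ℓ + 3) *
            Real.exp ((k + ℓ + x) * t / 5)
      = (Real.exp (2 * t / 5) - 1) / (Real.exp t - 1) * Real.exp (t * x / 5) := by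
  set u : ℝ := Real.exp (t / 5) with hu_def
  have hu : 1 < u := Real.one_lt_exp_iff.mpr (by linarith)
  have hu0 : 0 < u := by linarith
  have hup : (0:ℝ) < u + 1 := by linarith
  have hune : u + 1 ≠ 0 := ne_of_gt hup
  set E : ℝ := Real.exp (x * (t / 5)) with hE_def
  set r : ℝ := u * (3*u^2 + 5*u + 3) / (u+1)^4 with hr_def
  set c : ℝ := E / (u+1)^3 with hc_def
  set A : ℝ := (3/4) * (2/(u+1))^2 * u with hA_def
  set b : ℝ := (-1) * (1/12) * (2/(u+1))^2 * u with hb_def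
  have hexp : ∀ k ℓ : ℕ, Real.exp (((k:ℝ) + ℓ + x) * t / 5) = u^k * u^ℓ * E := by
    intro k ℓ
    rw [hu_def, hE_def,
      show ((k:ℝ) + ℓ + x) * t / 5 = (k:ℝ)*(t/5) + ((ℓ:ℝ)*(t/5) + x*(t/5)) by ring,
      Real.exp_add, Real.exp_add, Real.exp_nat_mul, Real.exp_nat_mul, mul_assoc]
  have key : ∀ k : ℕ, ((3 : ℝ) ^ k / 2 ^ (2 * k + 3) *
        ∑ ℓ ∈ Finset.range (k + 1),
          (k.choose ℓ : ℝ) * (-1 : ℝ) ^ ℓ * (1 / 12 ^ ℓ) *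
            (2 / (u + 1)) ^ (2 * k + 2 * ℓ + 3) *
            Real.exp ((k + ℓ + x) * t / 5)) = c * r ^ k := by
    intro k
    rw [Finset.mul_sum]
    have step : ∀ ℓ ∈ Finset.range (k+1),
        (3 : ℝ) ^ k / 2 ^ (2 * k + 3) *
          ((k.choose ℓ : ℝ) * (-1 : ℝ) ^ ℓ * (1 / 12 ^ ℓ) *
            (2 / (u + 1)) ^ (2 * k + 2 * ℓ + 3) *
            Real.exp ((k + ℓ + x) * t / 5))
        = c * A ^ k * (b ^ ℓ * (1:ℝ)^(k-ℓ) * (k.choose ℓ : ℝ)) := by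
      intro ℓ _
      rw [hexp k ℓ, hc_def, hA_def, hb_def, one_pow,
        show 2*k + 2*ℓ + 3 = 2*k + (2*ℓ + 3) by ring, pow_add, pow_add, pow_add,
        pow_mul, pow_mul, pow_mul]
      simp only [mul_pow, div_pow, one_pow]
      ring
    rw [Finset.sum_congr rfl step, ← Finset.mul_sum, ← add_pow b 1 k,
      mul_assoc, ← mul_pow]
    have hbase : A * (b + 1) = r := by
      rw [hA_def, hb_def, hr_def]; field_simp; ring
    rw [hbase]
  have hr0 : 0 ≤ r := by
    rw [hr_def]; positivity
  have hr1 : r < 1 := by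
    rw [hr_def, div_lt_one (by positivity)]
    nlinarith [pow_pos hu0 4, pow_pos hu0 3, pow_pos hu0 2, hu0]
  have hsum : Summable (fun k : ℕ => c * r ^ k) :=
    (summable_geometric_of_lt_one hr0 hr1).mul_left c
  constructor
  · exact hsum.congr fun k => (key k).symm
  · have htsum : ∑' k : ℕ, ((3 : ℝ) ^ k / 2 ^ (2 * k + 3) *
        ∑ ℓ ∈ Finset.range (k + 1),
          (k.choose ℓ : ℝ) * (-1 : ℝ) ^ ℓ * (1 / 12 ^ ℓ) *
            (2 / (u + 1)) ^ (2 * k + 2 * ℓ + 3) *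
            Real.exp ((k + ℓ + x) * t / 5)) = c * (1 - r)⁻¹ := by
      rw [tsum_congr key, tsum_mul_left, tsum_geometric_of_lt_one hr0 hr1]
    rw [htsum]
    have h2 : Real.exp (2 * t / 5) = u^2 := by
      rw [hu_def, ← Real.exp_nat_mul]; congr 1; push_cast; ring
    have h5 : Real.exp t = u^5 := by
      rw [hu_def, ← Real.exp_nat_mul]; congr 1; push_cast; ring
    have hE : Real.exp (t * x / 5) = E := by
      rw [hE_def]; ring_nf
    rw [h2, h5, hE, hc_def, hr_def]
    have h5ne : u^5 - 1 ≠ 0 := by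
      have : 1 < u^5 := one_lt_pow₀ hu (by norm_num)
      linarith
    have hrne : (u+1)^4 - u * (3*u^2 + 5*u + 3) ≠ 0 := by nlinarith [pow_pos hu0 4, pow_pos hu0 3, pow_pos hu0 2, hu0]
    field_simp
    rw [div_eq_iff (by convert hrne using 2; ring)]
    ring
end

section
/- For every integer n ≥ 0 and real x: B_{n+1}((x+2)/5) − B_{n+1}(x/5) = ((n+1)/5^n) Σ_{k=0}^∞ (3^k/2^{2k+3}) Σ_{ℓ=0}^k C(k,ℓ) (−1)^ℓ (1/12^ℓ) E_n^{(2k+2ℓ+3)}(k+ℓ+x), with the double series converging absolutely. -/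
/-- The Euler polynomial of order `p`, `E_n^{(p)}(x)`, defined via the
exponential generating function `(2/(e^t+1))^p e^{xt} = Σ E_n^{(p)}(x) t^n/n!`. -/
noncomputable def eulerHO (p n : ℕ) (x : ℝ) : ℝ :=
  (n.factorial : ℝ) * PowerSeries.coeff n
    (((2 : PowerSeries ℝ) * (PowerSeries.exp ℝ + 1)⁻¹) ^ p
      * PowerSeries.rescale x (PowerSeries.exp ℝ))

/-- The Bernoulli polynomial `B_n(x)`, with EGF `(t/(e^t-1)) e^{xt}`. -/
noncomputable def bernoulliPoly (n : ℕ) (x : ℝ) : ℝ :=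
  Polynomial.aeval x (Polynomial.bernoulli n)

open PowerSeries Finset

noncomputable section
namespace B3

local notation "EE" => PowerSeries.exp ℝ

def qq : PowerSeries ℝ := (2 : PowerSeries ℝ) * (EE + 1)⁻¹

lemma constCoeff_EE1 : constantCoeff (R := ℝ) (EE + 1) = 2 := by
  simp [PowerSeries.constantCoeff_exp]; norm_num

lemma qq_mul : qq * (EE + 1) = 2 := by
  rw [qq, mul_assoc, PowerSeries.inv_mul_cancel _ (by rw [constCoeff_EE1]; norm_num), mul_one]

def hh : PowerSeries ℝ := C (R := ℝ) (1/2) * (EE - 1)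

lemma two_hh : (2 : PowerSeries ℝ) * hh = EE - 1 := by
  have : (2 : PowerSeries ℝ) = C (R := ℝ) 2 := by simp [map_ofNat]
  rw [hh, this, ← mul_assoc, ← map_mul]; norm_num

lemma two_ne_zero' : (2 : PowerSeries ℝ) ≠ 0 := by
  intro h
  have := congrArg (constantCoeff (R := ℝ)) h
  simp only [map_ofNat, map_zero] at this
  norm_num at this

lemma qq_eq : qq = 1 - qq * hh := by
  have h2 : qq * (2 + 2 * hh) = 2 * 1 := by
    linear_combination qq_mul + qq * two_hh
  have : (2:PowerSeries ℝ) * (qq + qq * hh) = 2 * 1 := by linear_combination h2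
  have := mul_left_cancel₀ two_ne_zero' this
  linear_combination this

lemma constCoeff_qq : constantCoeff (R := ℝ) qq = 1 := by
  have := congrArg (constantCoeff (R := ℝ)) qq_mul
  simp only [map_mul, constCoeff_EE1, map_ofNat] at this
  linarith

lemma hh_coeff_nonneg (m : ℕ) : 0 ≤ coeff (R := ℝ) m hh := by
  rw [hh, coeff_C_mul, map_sub, PowerSeries.coeff_exp]
  rcases Nat.eq_zero_or_pos m with h | h
  · subst h; simp
  · rw [PowerSeries.coeff_one, if_neg h.ne']
    have : (0:ℝ) ≤ algebraMap ℚ ℝ (1 / m.factorial) := by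
      rw [eq_ratCast]; positivity
    nlinarith

lemma hh_coeff_zero : coeff (R := ℝ) 0 hh = 0 := by
  rw [hh, coeff_C_mul]
  simp [PowerSeries.coeff_zero_eq_constantCoeff, PowerSeries.constantCoeff_exp]

lemma constCoeff_hh : constantCoeff (R := ℝ) hh = 0 := by
  rw [← PowerSeries.coeff_zero_eq_constantCoeff_apply]; exact hh_coeff_zero

def QQ : PowerSeries ℝ := (1 - hh)⁻¹

lemma one_sub_hh : constantCoeff (R := ℝ) (1 - hh) ≠ 0 := by
  rw [map_sub, constCoeff_hh, map_one]; norm_num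

lemma QQ_mul : QQ * (1 - hh) = 1 := by
  rw [mul_comm]; exact PowerSeries.mul_inv_cancel _ one_sub_hh

lemma QQ_eq : QQ = 1 + QQ * hh := by
  linear_combination QQ_mul

lemma constCoeff_QQ : constantCoeff (R := ℝ) QQ = 1 := by
  have := congrArg (constantCoeff (R := ℝ)) QQ_mul
  simp only [map_mul, map_sub, map_one, constCoeff_hh, sub_zero, mul_one] at this
  exact this

/-- coefficientwise domination -/
def Dom (f g : PowerSeries ℝ) : Prop := ∀ m, |coeff (R := ℝ) m f| ≤ coeff (R := ℝ) m g

lemma Dom.coeff_nonneg {f g : PowerSeries ℝ} (h : Dom f g) (m : ℕ) : 0 ≤ coeff (R := ℝ) m g :=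
  le_trans (abs_nonneg _) (h m)

lemma Dom.mul {f g F G : PowerSeries ℝ} (h1 : Dom f F) (h2 : Dom g G) : Dom (f * g) (F * G) := by
  intro m
  rw [coeff_mul, coeff_mul]
  refine (Finset.abs_sum_le_sum_abs _ _).trans (Finset.sum_le_sum ?_)
  rintro ⟨i, j⟩ _
  rw [abs_mul]
  exact mul_le_mul (h1 i) (h2 j) (abs_nonneg _) (h1.coeff_nonneg i)

lemma Dom.one : Dom 1 1 := by
  intro m
  rw [PowerSeries.coeff_one]
  split <;> simp

lemma Dom.pow {f F : PowerSeries ℝ} (h : Dom f F) (p : ℕ) : Dom (f ^ p) (F ^ p) := by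
  induction p with
  | zero => simpa using Dom.one
  | succ p ih => rw [pow_succ, pow_succ]; exact ih.mul h

lemma QQ_nonneg (m : ℕ) : 0 ≤ coeff (R := ℝ) m QQ := by
  induction m using Nat.strong_induction_on with
  | _ m ih =>
    have h := congrArg (coeff (R := ℝ) m) QQ_eq
    rw [map_add, coeff_mul] at h
    rw [h]
    have h1 : (0:ℝ) ≤ coeff (R := ℝ) m 1 := by rw [PowerSeries.coeff_one]; split <;> norm_num
    refine add_nonneg h1 (Finset.sum_nonneg ?_)
    rintro ⟨i, j⟩ hij
    rw [Finset.HasAntidiagonal.mem_antidiagonal] at hij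
    rcases Nat.lt_or_ge i m with hi | hi
    · exact mul_nonneg (ih i hi) (hh_coeff_nonneg j)
    · have : j = 0 := by omega
      rw [this, hh_coeff_zero, mul_zero]

lemma dom_qq : Dom qq QQ := by
  intro m
  induction m using Nat.strong_induction_on with
  | _ m ih =>
    have hq := congrArg (coeff (R := ℝ) m) qq_eq
    have hQ := congrArg (coeff (R := ℝ) m) QQ_eq
    rw [map_sub] at hq
    rw [map_add] at hQ
    rw [hq, hQ]
    have key : |coeff (R := ℝ) m (qq * hh)| ≤ coeff (R := ℝ) m (QQ * hh) := by
      rw [coeff_mul, coeff_mul]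
      refine (Finset.abs_sum_le_sum_abs _ _).trans (Finset.sum_le_sum ?_)
      rintro ⟨i, j⟩ hij
      rw [Finset.HasAntidiagonal.mem_antidiagonal] at hij
      rw [abs_mul, abs_of_nonneg (hh_coeff_nonneg j)]
      rcases Nat.lt_or_ge i m with hi | hi
      · exact mul_le_mul_of_nonneg_right (ih i hi) (hh_coeff_nonneg j)
      · have hjm : j = 0 := by omega
        rw [hjm, hh_coeff_zero, mul_zero, mul_zero]
    have h1 : |coeff (R := ℝ) m (1 : PowerSeries ℝ)| = coeff (R := ℝ) m 1 := by
      rw [PowerSeries.coeff_one]; split <;> simp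
    calc |coeff (R := ℝ) m 1 - coeff (R := ℝ) m (qq * hh)|
        ≤ |coeff (R := ℝ) m (1:PowerSeries ℝ)| + |coeff (R := ℝ) m (qq * hh)| := abs_sub _ _
      _ ≤ coeff (R := ℝ) m 1 + coeff (R := ℝ) m (QQ * hh) := by rw [h1]; linarith

lemma dom_rescale {a b : ℝ} (hab : |a| ≤ b) :
    Dom (rescale a EE) (rescale b EE) := by
  intro m
  rw [coeff_rescale, coeff_rescale, PowerSeries.coeff_exp]
  have he : (0:ℝ) ≤ algebraMap ℚ ℝ (1 / m.factorial) := by rw [eq_ratCast]; positivity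
  rw [abs_mul, abs_of_nonneg he, abs_pow]
  exact mul_le_mul_of_nonneg_right (pow_le_pow_left₀ (abs_nonneg a) hab m) he

lemma coeff_zero_of_big (f v : PowerSeries ℝ) (hv : constantCoeff (R := ℝ) v = 0) (n j : ℕ)
    (hj : n < j) : coeff (R := ℝ) n (f * v ^ j) = 0 := by
  have hdvd : (PowerSeries.X : PowerSeries ℝ) ^ j ∣ f * v ^ j :=
    Dvd.dvd.mul_left (pow_dvd_pow_of_dvd (PowerSeries.X_dvd_iff.2 hv) j) f
  exact PowerSeries.X_pow_dvd_iff.1 hdvd n hj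

lemma coeff_mul_pow_le (f w : PowerSeries ℝ) (n : ℕ) (hw : constantCoeff (R := ℝ) w ≠ 0) :
    ∃ Cst : ℝ, 0 ≤ Cst ∧ ∀ k : ℕ, |coeff (R := ℝ) n (f * w ^ k)|
      ≤ Cst * ((k+1 : ℝ))^n * |constantCoeff (R := ℝ) w| ^ k := by
  set w0 := constantCoeff (R := ℝ) w with hw0
  set v : PowerSeries ℝ := C (R := ℝ) w0⁻¹ * w - 1 with hv
  have hv0 : constantCoeff (R := ℝ) v = 0 := by
    rw [hv, map_sub, map_mul, constantCoeff_C, map_one, ← hw0, inv_mul_cancel₀ hw, sub_self]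
  have hwC : w = C (R := ℝ) w0 * (1 + v) := by
    rw [hv]
    have : C (R := ℝ) w0 * C (R := ℝ) w0⁻¹ = 1 := by rw [← map_mul, mul_inv_cancel₀ hw, map_one]
    calc w = C (R := ℝ) w0 * C (R := ℝ) w0⁻¹ * w := by rw [this, one_mul]
    _ = C (R := ℝ) w0 * (1 + (C (R := ℝ) w0⁻¹ * w - 1)) := by ring
  refine ⟨∑ j ∈ range (n+1), |coeff (R := ℝ) n (f * v ^ j)|,
    Finset.sum_nonneg (fun _ _ => abs_nonneg _), fun k => ?_⟩
  have expand : coeff (R := ℝ) n (f * w ^ k)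
      = w0 ^ k * ∑ j ∈ range (k+1), (k.choose j : ℝ) * coeff (R := ℝ) n (f * v ^ j) := by
    rw [hwC, mul_pow, ← map_pow]
    have : f * (C (R := ℝ) (w0 ^ k) * (1 + v) ^ k) = C (R := ℝ) (w0 ^ k) * (f * (1+v)^k) := by ring
    rw [this, coeff_C_mul]
    congr 1
    rw [add_comm (1:PowerSeries ℝ) v, add_pow]
    rw [Finset.mul_sum, map_sum]
    refine Finset.sum_congr rfl (fun j _ => ?_)
    have : f * (v ^ j * 1 ^ (k - j) * (k.choose j : PowerSeries ℝ))
        = C (R := ℝ) ((k.choose j : ℝ)) * (f * v ^ j) := by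
      rw [← map_natCast (C (R := ℝ)) (k.choose j)]; ring
    rw [this, coeff_C_mul]
  rw [expand, abs_mul, abs_pow, mul_comm (|w0| ^ k)]
  refine mul_le_mul_of_nonneg_right ?_ (pow_nonneg (abs_nonneg _) k)
  have hstep : ∑ j ∈ range (k+1), (k.choose j : ℝ) * |coeff (R := ℝ) n (f * v ^ j)|
      = ∑ j ∈ range (n+1), (k.choose j : ℝ) * |coeff (R := ℝ) n (f * v ^ j)| := by
    rcases le_total k n with hkn | hnk
    · refine Finset.sum_subset (by intro a ha; simp at ha ⊢; omega) ?_
      intro j hj hj2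
      simp only [Finset.mem_range, not_lt] at hj hj2
      rw [Nat.choose_eq_zero_of_lt (by omega)]
      simp
    · symm
      refine Finset.sum_subset (by intro a ha; simp at ha ⊢; omega) ?_
      intro j hj hj2
      simp only [Finset.mem_range, not_lt] at hj hj2
      rw [coeff_zero_of_big f v hv0 n j (by omega), abs_zero, mul_zero]
  calc |∑ j ∈ range (k+1), (k.choose j : ℝ) * coeff (R := ℝ) n (f * v ^ j)|
      ≤ ∑ j ∈ range (k+1), |(k.choose j : ℝ) * coeff (R := ℝ) n (f * v ^ j)| :=
        Finset.abs_sum_le_sum_abs _ _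
    _ = ∑ j ∈ range (k+1), (k.choose j : ℝ) * |coeff (R := ℝ) n (f * v ^ j)| := by
        refine Finset.sum_congr rfl (fun j _ => ?_)
        rw [abs_mul, abs_of_nonneg (by positivity)]
    _ = ∑ j ∈ range (n+1), (k.choose j : ℝ) * |coeff (R := ℝ) n (f * v ^ j)| := hstep
    _ ≤ ∑ j ∈ range (n+1), ((k+1:ℝ))^n * |coeff (R := ℝ) n (f * v ^ j)| := by
        refine Finset.sum_le_sum (fun j hj => ?_)
        refine mul_le_mul_of_nonneg_right ?_ (abs_nonneg _)
        have h1 : (k.choose j : ℝ) ≤ (k:ℝ) ^ j := by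
          exact_mod_cast Nat.cast_le.2 (Nat.choose_le_pow k j)
        have h2 : (k:ℝ) ^ j ≤ (k+1:ℝ) ^ j := by
          exact pow_le_pow_left₀ (by positivity) (by linarith) j
        have h3 : (k+1:ℝ) ^ j ≤ (k+1:ℝ) ^ n := by
          refine pow_le_pow_right₀ (by linarith)
            (by simpa using Nat.lt_succ_iff.1 (Finset.mem_range.1 hj))
        linarith
    _ = (∑ j ∈ range (n+1), |coeff (R := ℝ) n (f * v ^ j)|) * ((k+1:ℝ))^n := by
        rw [Finset.sum_mul]
        refine Finset.sum_congr rfl (fun j _ => by ring)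

lemma hres (k ℓ : ℕ) (y : ℝ) :
    rescale ((k:ℝ) + (ℓ:ℝ) + y) EE = EE^k * EE^ℓ * rescale y EE := by
  rw [PowerSeries.exp_pow_eq_rescale_exp, PowerSeries.exp_pow_eq_rescale_exp,
    PowerSeries.exp_mul_exp_eq_exp_add, PowerSeries.exp_mul_exp_eq_exp_add]

lemma hW (r : PowerSeries ℝ) (s : ℝ) (k : ℕ) :
    (C (R := ℝ) (3/4) * (r^2 * EE) * (1 + C (R := ℝ) (s/12) * (r^2 * EE)))^k
    = ∑ ℓ ∈ range (k+1),
        C (R := ℝ) ((3/4)^k * ((s/12)^ℓ * (k.choose ℓ : ℝ))) * ((r^2*EE)^k * (r^2*EE)^ℓ) := by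
  rw [mul_pow, add_comm (1 : PowerSeries ℝ), add_pow, Finset.mul_sum]
  refine Finset.sum_congr rfl (fun ℓ _ => ?_)
  have hc : C (R := ℝ) ((3/4)^k * ((s/12)^ℓ * (k.choose ℓ:ℝ)))
      = (C (R := ℝ) (3/4))^k * ((C (R := ℝ) (s/12))^ℓ * C (R := ℝ) ((k.choose ℓ:ℝ))) := by
    simp only [map_mul, map_pow]
  rw [hc, ← map_natCast (C (R := ℝ)) (k.choose ℓ)]
  ring

lemma sum_eq (r : PowerSeries ℝ) (s y : ℝ) (n k : ℕ) :
    (3:ℝ)^k / 2^(2*k+3) * ∑ ℓ ∈ range (k+1),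
      ((k.choose ℓ : ℝ) * s^ℓ * (1/12^ℓ) *
        ((n.factorial:ℝ) * coeff (R := ℝ) n (r^(2*k+2*ℓ+3) * rescale ((k:ℝ)+(ℓ:ℝ)+y) EE)))
    = (n.factorial:ℝ) * coeff (R := ℝ) n
        ((C (R := ℝ) (1/8) * r^3 * rescale y EE) *
         (C (R := ℝ) (3/4) * (r^2 * EE) * (1 + C (R := ℝ) (s/12) * (r^2 * EE)))^k) := by
  rw [show (3:ℝ)^k / 2^(2*k+3) = 1/8 * (3/4)^k by
    rw [pow_add, pow_mul, div_pow]
    norm_num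
    ring]
  rw [hW, Finset.mul_sum, Finset.mul_sum, map_sum, Finset.mul_sum]
  refine Finset.sum_congr rfl (fun ℓ _ => ?_)
  rw [hres k ℓ y]
  have hmono : r^(2*k+2*ℓ+3) * (EE^k * EE^ℓ * rescale y EE)
      = (r^3 * rescale y EE) * ((r^2*EE)^k * (r^2*EE)^ℓ) := by ring
  have hshape : (C (R := ℝ) (1/8) * r^3 * rescale y EE) *
      (C (R := ℝ) ((3/4)^k * ((s/12)^ℓ * (k.choose ℓ : ℝ))) * ((r^2*EE)^k * (r^2*EE)^ℓ))
      = C (R := ℝ) (1/8) * (C (R := ℝ) ((3/4)^k * ((s/12)^ℓ * (k.choose ℓ : ℝ)))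
          * ((r^3 * rescale y EE) * ((r^2*EE)^k * (r^2*EE)^ℓ))) := by ring
  rw [hmono, hshape, coeff_C_mul, coeff_C_mul]
  ring_nf
  simp only [one_div]
  ring

def LL (x : ℝ) : PowerSeries ℝ := PowerSeries.mk fun m =>
  5^(m+1) * (bernoulliPoly (m+1) ((x+2)/5) - bernoulliPoly (m+1) (x/5)) * (1/(m+1).factorial)

def Bs (y : ℝ) : PowerSeries ℝ := PowerSeries.mk fun m =>
  Polynomial.aeval y ((1/m.factorial : ℚ) • Polynomial.bernoulli m)

lemma hE5 : rescale (5:ℝ) EE = EE^5 := by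
  rw [PowerSeries.exp_pow_eq_rescale_exp]; norm_num

lemma hE2 : rescale (2:ℝ) EE = EE^2 := by
  rw [PowerSeries.exp_pow_eq_rescale_exp]; norm_num

lemma key (y : ℝ) :
    rescale (5:ℝ) (Bs y) * (EE^5 - 1) = C (R := ℝ) 5 * PowerSeries.X * rescale (5*y) EE := by
  have h := Polynomial.bernoulli_generating_function y
  have h2 := congrArg (rescale (5:ℝ)) h
  rw [map_mul, map_mul, map_sub, map_one, hE5, rescale_X] at h2
  rw [Bs, h2, rescale_rescale]
  rw [mul_comm y 5]

lemma coeff_Bs5 (y : ℝ) (m : ℕ) :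
    coeff (R := ℝ) m (rescale (5:ℝ) (Bs y)) = 5^m * (bernoulliPoly m y) * (1/m.factorial) := by
  rw [coeff_rescale, Bs, coeff_mk, map_smul, bernoulliPoly]
  rw [Rat.smul_def]
  push_cast
  ring

lemma hXL (x : ℝ) :
    rescale (5:ℝ) (Bs ((x+2)/5)) - rescale (5:ℝ) (Bs (x/5)) = PowerSeries.X * LL x := by
  ext m
  rw [map_sub, coeff_Bs5, coeff_Bs5]
  cases m with
  | zero =>
    rw [coeff_zero_X_mul]
    simp [bernoulliPoly, Polynomial.bernoulli_zero]
  | succ m =>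
    rw [coeff_succ_X_mul, LL, coeff_mk]
    ring

lemma X_ne : (PowerSeries.X : PowerSeries ℝ) ≠ 0 := PowerSeries.X_ne_zero

lemma LL_mul (x : ℝ) : LL x * (EE^5 - 1) = C (R := ℝ) 5 * (rescale x EE * (EE^2 - 1)) := by
  apply mul_left_cancel₀ X_ne
  have h1 := key ((x+2)/5)
  have h0 := key (x/5)
  have hsub : (rescale (5:ℝ) (Bs ((x+2)/5)) - rescale (5:ℝ) (Bs (x/5))) * (EE^5 - 1)
      = C (R := ℝ) 5 * PowerSeries.X * (rescale (5*((x+2)/5)) EE - rescale (5*(x/5)) EE) := by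
    rw [sub_mul, h1, h0]; ring
  rw [hXL] at hsub
  have e1 : 5*((x+2)/5) = x + 2 := by ring
  have e0 : 5*(x/5) = x := by ring
  rw [e1, e0] at hsub
  have hx2 : rescale (x+2:ℝ) EE = rescale x EE * EE^2 := by
    rw [← PowerSeries.exp_mul_exp_eq_exp_add x 2, hE2]
  rw [hx2] at hsub
  calc PowerSeries.X * (LL x * (EE^5-1)) = PowerSeries.X * LL x * (EE^5-1) := by ring
    _ = C (R := ℝ) 5 * PowerSeries.X * (rescale x EE * EE^2 - rescale x EE) := hsub
    _ = PowerSeries.X * (C (R := ℝ) 5 * (rescale x EE * (EE^2 - 1))) := by ring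

def ww : PowerSeries ℝ := C (R := ℝ) (3/4) * (qq^2 * EE) * (1 + C (R := ℝ) ((-1:ℝ)/12) * (qq^2 * EE))
def WW : PowerSeries ℝ := C (R := ℝ) (3/4) * (QQ^2 * EE) * (1 + C (R := ℝ) ((1:ℝ)/12) * (QQ^2 * EE))

lemma constCoeff_ww : constantCoeff (R := ℝ) ww = 11/16 := by
  rw [ww]
  simp only [map_mul, map_add, map_one, map_pow, constCoeff_qq, constantCoeff_C,
    PowerSeries.constantCoeff_exp]
  norm_num

lemma constCoeff_WW : constantCoeff (R := ℝ) WW = 13/16 := by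
  rw [WW]
  simp only [map_mul, map_add, map_one, map_pow, constCoeff_QQ, constantCoeff_C,
    PowerSeries.constantCoeff_exp]
  norm_num

/-- the master formal identity -/
lemma master (x : ℝ) :
    C (R := ℝ) (1/8) * qq^3 * rescale x EE = (C (R := ℝ) (1/5) * LL x) * (1 - ww) := by
  have hEE1 : (EE + 1 : PowerSeries ℝ) ≠ 0 := by
    intro h
    have := congrArg (constantCoeff (R := ℝ)) h
    rw [constCoeff_EE1, map_zero] at this
    norm_num at this
  have hEm1 : (EE - 1 : PowerSeries ℝ) ≠ 0 := by
    intro h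
    have := congrArg (coeff (R := ℝ) 1) h
    rw [map_sub, PowerSeries.coeff_exp, PowerSeries.coeff_one, map_zero] at this
    norm_num at this
  have hne : ((EE+1 : PowerSeries ℝ)^4 * (EE - 1)) ≠ 0 :=
    mul_ne_zero (pow_ne_zero 4 hEE1) hEm1
  apply mul_right_cancel₀ hne
  have hq2' : qq^2*(EE+1)^2 = C (R := ℝ) 4 := by
    rw [← mul_pow, qq_mul]
    rw [show (2:PowerSeries ℝ) = C (R := ℝ) 2 by simp [map_ofNat], ← map_pow]
    norm_num
  have hq3' : qq^3*(EE+1)^3 = C (R := ℝ) 8 := by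
    rw [← mul_pow, qq_mul]
    rw [show (2:PowerSeries ℝ) = C (R := ℝ) 2 by simp [map_ofNat], ← map_pow]
    norm_num
  have hq4' : qq^4*(EE+1)^4 = C (R := ℝ) 16 := by
    rw [← mul_pow, qq_mul]
    rw [show (2:PowerSeries ℝ) = C (R := ℝ) 2 by simp [map_ofNat], ← map_pow]
    norm_num
  have h34 : C (R := ℝ) (3/4) * C (R := ℝ) 4 = 3 := by
    rw [← map_mul]; norm_num
    simp [map_ofNat]
  have h1612 : C (R := ℝ) (3/4) * C (R := ℝ) ((-1:ℝ)/12) * C (R := ℝ) 16 = -1 := by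
    rw [← map_mul, ← map_mul]; norm_num
  have h18 : C (R := ℝ) (1/8) * C (R := ℝ) 8 = 1 := by
    rw [← map_mul]; norm_num
  have h15 : C (R := ℝ) (1/5) * C (R := ℝ) 5 = 1 := by
    rw [← map_mul]; norm_num
  have hA : (1 - ww) * (EE+1)^4 = 1 + EE + EE^2 + EE^3 + EE^4 := by
    rw [ww]
    linear_combination (-(C (R := ℝ) (3/4) * EE * (EE+1)^2)) * hq2'
      + (-(C (R := ℝ) (3/4) * C (R := ℝ) ((-1:ℝ)/12) * EE^2)) * hq4'
      + (-(EE*(EE+1)^2)) * h34 + (-(EE^2)) * h1612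
  have hB : C (R := ℝ) (1/8) * qq^3 * rescale x EE * (EE+1)^4 = (EE+1) * rescale x EE := by
    linear_combination (C (R := ℝ) (1/8) * (EE+1) * rescale x EE) * hq3'
      + ((EE+1)*rescale x EE) * h18
  have hL := LL_mul x
  linear_combination (EE - 1) * hB - (C (R := ℝ) (1/5) * LL x * (EE-1)) * hA
    - C (R := ℝ) (1/5) * hL - (rescale x EE * (EE^2-1)) * h15

lemma euler_eq (p n : ℕ) (a : ℝ) :
    eulerHO p n a = (n.factorial : ℝ) * coeff (R := ℝ) n (qq ^ p * rescale a EE) := rfl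

lemma summable_aux (n : ℕ) {r : ℝ} (h0 : 0 < r) (h1 : r < 1) :
    Summable (fun k : ℕ => ((k:ℝ)+1)^n * r^k) := by
  have h := summable_pow_mul_geometric_of_norm_lt_one (R := ℝ) n
    (r := r) (by rw [Real.norm_eq_abs, abs_of_nonneg h0.le]; exact h1)
  have h2 : Summable (fun k : ℕ => ((k+1:ℕ):ℝ)^n * r^(k+1)) := (summable_nat_add_iff 1).2 h
  have h3 := h2.mul_left (1/r)
  apply h3.congr
  intro k
  have hr : r ≠ 0 := h0.ne'
  push_cast
  rw [pow_succ]
  field_simp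

lemma term_eq (n k : ℕ) (x : ℝ) :
    (3:ℝ)^k / 2^(2*k+3) * ∑ ℓ ∈ range (k+1),
      ((k.choose ℓ : ℝ) * (-1:ℝ)^ℓ * (1/12^ℓ) *
        eulerHO (2*k+2*ℓ+3) n ((k:ℝ)+(ℓ:ℝ)+x))
    = (n.factorial:ℝ) * coeff (R := ℝ) n ((C (R := ℝ) (1/8) * qq^3 * rescale x EE) * ww ^ k) := by
  simp only [euler_eq]
  exact sum_eq qq (-1) x n k

lemma termQ_eq (n k : ℕ) (y : ℝ) :
    (3:ℝ)^k / 2^(2*k+3) * ∑ ℓ ∈ range (k+1),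
      ((k.choose ℓ : ℝ) * (1:ℝ)^ℓ * (1/12^ℓ) * ((n.factorial:ℝ) *
        coeff (R := ℝ) n (QQ^(2*k+2*ℓ+3) * rescale ((k:ℝ)+(ℓ:ℝ)+y) EE)))
    = (n.factorial:ℝ) * coeff (R := ℝ) n ((C (R := ℝ) (1/8) * QQ^3 * rescale y EE) * WW ^ k) :=
  sum_eq QQ 1 y n k

end B3

end

open B3 Filter Topology PowerSeries in
theorem bessel_three_loop (n : ℕ) (x : ℝ) :
    Summable (fun k : ℕ => ∑ ℓ ∈ Finset.range (k + 1),
        |(3 : ℝ) ^ k / 2 ^ (2 * k + 3) * (k.choose ℓ : ℝ) * (-1 : ℝ) ^ ℓ * (1 / 12 ^ ℓ) *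
          eulerHO (2 * k + 2 * ℓ + 3) n (k + ℓ + x)|) ∧
    bernoulliPoly (n + 1) ((x + 2) / 5) - bernoulliPoly (n + 1) (x / 5)
      = ((n + 1 : ℝ) / 5 ^ n) * ∑' k : ℕ, (3 : ℝ) ^ k / 2 ^ (2 * k + 3) *
          ∑ ℓ ∈ Finset.range (k + 1),
            (k.choose ℓ : ℝ) * (-1 : ℝ) ^ ℓ * (1 / 12 ^ ℓ) *
              eulerHO (2 * k + 2 * ℓ + 3) n (k + ℓ + x) := by
  set t : ℕ → ℝ := fun k => (3 : ℝ) ^ k / 2 ^ (2 * k + 3) *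
      ∑ ℓ ∈ Finset.range (k + 1),
        (k.choose ℓ : ℝ) * (-1 : ℝ) ^ ℓ * (1 / 12 ^ ℓ) *
          eulerHO (2 * k + 2 * ℓ + 3) n (k + ℓ + x) with ht_def
  set a : ℕ → ℝ := fun k => ∑ ℓ ∈ Finset.range (k + 1),
        |(3 : ℝ) ^ k / 2 ^ (2 * k + 3) * (k.choose ℓ : ℝ) * (-1 : ℝ) ^ ℓ * (1 / 12 ^ ℓ) *
          eulerHO (2 * k + 2 * ℓ + 3) n (k + ℓ + x)| with ha_def
  -- term identity
  have ht : ∀ k, t k = (n.factorial : ℝ) *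
      PowerSeries.coeff (R := ℝ) n ((PowerSeries.C (R := ℝ) (1/8) * qq^3
        * PowerSeries.rescale x (PowerSeries.exp ℝ)) * ww ^ k) := by
    intro k
    rw [ht_def]
    simp only
    rw [show (∑ ℓ ∈ Finset.range (k + 1),
        (k.choose ℓ : ℝ) * (-1 : ℝ) ^ ℓ * (1 / 12 ^ ℓ) *
          eulerHO (2 * k + 2 * ℓ + 3) n (k + ℓ + x))
      = ∑ ℓ ∈ Finset.range (k + 1),
        ((k.choose ℓ : ℝ) * (-1:ℝ)^ℓ * (1/12^ℓ) *
          eulerHO (2*k+2*ℓ+3) n ((k:ℝ)+(ℓ:ℝ)+x)) from rfl]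
    exact term_eq n k x
  -- domination of the abs sums
  have ha : ∀ k, a k ≤ (n.factorial : ℝ) * PowerSeries.coeff (R := ℝ) n
      ((PowerSeries.C (R := ℝ) (1/8) * QQ^3 * PowerSeries.rescale |x| (PowerSeries.exp ℝ)) * WW ^ k) := by
    intro k
    rw [ha_def]
    simp only
    have hb : ∀ ℓ ∈ Finset.range (k+1),
        |(3 : ℝ) ^ k / 2 ^ (2 * k + 3) * (k.choose ℓ : ℝ) * (-1 : ℝ) ^ ℓ * (1 / 12 ^ ℓ) *
          eulerHO (2 * k + 2 * ℓ + 3) n (k + ℓ + x)|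
        ≤ (3 : ℝ) ^ k / 2 ^ (2 * k + 3) *
          ((k.choose ℓ : ℝ) * (1:ℝ)^ℓ * (1 / 12 ^ ℓ) * ((n.factorial : ℝ) *
            PowerSeries.coeff (R := ℝ) n (QQ^(2*k+2*ℓ+3)
              * PowerSeries.rescale ((k:ℝ)+(ℓ:ℝ)+|x|) (PowerSeries.exp ℝ)))) := by
      intro ℓ _
      have habs : |(k:ℝ) + (ℓ:ℝ) + x| ≤ (k:ℝ) + (ℓ:ℝ) + |x| := by
        have h1 := abs_add_le ((k:ℝ) + (ℓ:ℝ)) x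
        have h2 : |(k:ℝ) + (ℓ:ℝ)| = (k:ℝ) + (ℓ:ℝ) := abs_of_nonneg (by positivity)
        linarith
      have hdom := ((dom_qq.pow (2*k+2*ℓ+3)).mul (dom_rescale habs)) n
      have he : |eulerHO (2*k+2*ℓ+3) n ((k:ℝ)+(ℓ:ℝ)+x)|
          ≤ (n.factorial : ℝ) * PowerSeries.coeff (R := ℝ) n (QQ^(2*k+2*ℓ+3)
            * PowerSeries.rescale ((k:ℝ)+(ℓ:ℝ)+|x|) (PowerSeries.exp ℝ)) := by
        rw [euler_eq, abs_mul, abs_of_nonneg (by positivity : (0:ℝ) ≤ (n.factorial:ℝ))]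
        exact mul_le_mul_of_nonneg_left hdom (by positivity)
      calc |(3 : ℝ) ^ k / 2 ^ (2 * k + 3) * (k.choose ℓ : ℝ) * (-1 : ℝ) ^ ℓ * (1 / 12 ^ ℓ) *
          eulerHO (2 * k + 2 * ℓ + 3) n (k + ℓ + x)|
          = (3 : ℝ) ^ k / 2 ^ (2 * k + 3) * (k.choose ℓ : ℝ) * (1 / 12 ^ ℓ) *
            |eulerHO (2 * k + 2 * ℓ + 3) n ((k:ℝ) + (ℓ:ℝ) + x)| := by
            rw [abs_mul, abs_mul, abs_mul, abs_mul]
            rw [abs_of_nonneg (by positivity : (0:ℝ) ≤ (3:ℝ)^k / 2^(2*k+3)),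
              abs_of_nonneg (by positivity : (0:ℝ) ≤ ((k.choose ℓ:ℝ))),
              abs_of_nonneg (by positivity : (0:ℝ) ≤ (1/12^ℓ:ℝ))]
            rw [abs_pow, abs_neg, abs_one, one_pow, mul_one]
        _ ≤ (3 : ℝ) ^ k / 2 ^ (2 * k + 3) * (k.choose ℓ : ℝ) * (1 / 12 ^ ℓ) *
            ((n.factorial : ℝ) * PowerSeries.coeff (R := ℝ) n (QQ^(2*k+2*ℓ+3)
              * PowerSeries.rescale ((k:ℝ)+(ℓ:ℝ)+|x|) (PowerSeries.exp ℝ))) := by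
            refine mul_le_mul_of_nonneg_left he (by positivity)
        _ = (3 : ℝ) ^ k / 2 ^ (2 * k + 3) *
          ((k.choose ℓ : ℝ) * (1:ℝ)^ℓ * (1 / 12 ^ ℓ) * ((n.factorial : ℝ) *
            PowerSeries.coeff (R := ℝ) n (QQ^(2*k+2*ℓ+3)
              * PowerSeries.rescale ((k:ℝ)+(ℓ:ℝ)+|x|) (PowerSeries.exp ℝ)))) := by ring
    calc (∑ ℓ ∈ Finset.range (k+1), |(3 : ℝ) ^ k / 2 ^ (2 * k + 3) * (k.choose ℓ : ℝ) *
            (-1 : ℝ) ^ ℓ * (1 / 12 ^ ℓ) * eulerHO (2 * k + 2 * ℓ + 3) n (k + ℓ + x)|)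
        ≤ ∑ ℓ ∈ Finset.range (k+1), (3 : ℝ) ^ k / 2 ^ (2 * k + 3) *
          ((k.choose ℓ : ℝ) * (1:ℝ)^ℓ * (1 / 12 ^ ℓ) * ((n.factorial : ℝ) *
            PowerSeries.coeff (R := ℝ) n (QQ^(2*k+2*ℓ+3)
              * PowerSeries.rescale ((k:ℝ)+(ℓ:ℝ)+|x|) (PowerSeries.exp ℝ)))) :=
          Finset.sum_le_sum hb
      _ = (3 : ℝ) ^ k / 2 ^ (2 * k + 3) * ∑ ℓ ∈ Finset.range (k+1),
          ((k.choose ℓ : ℝ) * (1:ℝ)^ℓ * (1 / 12 ^ ℓ) * ((n.factorial : ℝ) *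
            PowerSeries.coeff (R := ℝ) n (QQ^(2*k+2*ℓ+3)
              * PowerSeries.rescale ((k:ℝ)+(ℓ:ℝ)+|x|) (PowerSeries.exp ℝ)))) :=
          (Finset.mul_sum _ _ _).symm
      _ = (n.factorial : ℝ) * PowerSeries.coeff (R := ℝ) n
          ((PowerSeries.C (R := ℝ) (1/8) * QQ^3 * PowerSeries.rescale |x| (PowerSeries.exp ℝ))
            * WW ^ k) := termQ_eq n k |x|
  -- summability of the dominating sequence
  have hWW0 : PowerSeries.constantCoeff (R := ℝ) WW ≠ 0 := by rw [constCoeff_WW]; norm_num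
  obtain ⟨Cst, hC0, hCb⟩ := coeff_mul_pow_le
    (PowerSeries.C (R := ℝ) (1/8) * QQ^3 * PowerSeries.rescale |x| (PowerSeries.exp ℝ)) WW n hWW0
  have hCb' : ∀ k : ℕ, (n.factorial : ℝ) * PowerSeries.coeff (R := ℝ) n
      ((PowerSeries.C (R := ℝ) (1/8) * QQ^3 * PowerSeries.rescale |x| (PowerSeries.exp ℝ)) * WW ^ k)
      ≤ ((n.factorial : ℝ) * Cst) * (((k:ℝ)+1)^n * (13/16)^k) := by
    intro k
    set Z := PowerSeries.coeff (R := ℝ) n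
      ((PowerSeries.C (R := ℝ) (1/8) * QQ^3 * PowerSeries.rescale |x| (PowerSeries.exp ℝ)) * WW ^ k)
    have h2 := hCb k
    rw [constCoeff_WW] at h2
    have h3 : |(13/16 : ℝ)| = 13/16 := by norm_num
    rw [h3] at h2
    calc (n.factorial : ℝ) * Z
        ≤ (n.factorial : ℝ) * |Z| := mul_le_mul_of_nonneg_left (le_abs_self _) (by positivity)
      _ ≤ (n.factorial : ℝ) * (Cst * ((k:ℝ)+1)^n * (13/16)^k) :=
          mul_le_mul_of_nonneg_left h2 (by positivity)
      _ = ((n.factorial : ℝ) * Cst) * (((k:ℝ)+1)^n * (13/16)^k) := by ring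
  have hsum_dom : Summable (fun k : ℕ => ((n.factorial : ℝ) * Cst) *
      (((k:ℝ)+1)^n * (13/16)^k)) :=
    (summable_aux n (by norm_num) (by norm_num)).mul_left _
  have hSa : Summable a := by
    refine Summable.of_nonneg_of_le (fun k => ?_) (fun k => (ha k).trans (hCb' k)) hsum_dom
    rw [ha_def]
    exact Finset.sum_nonneg (fun _ _ => abs_nonneg _)
  refine ⟨hSa, ?_⟩
  -- summability of t
  have hta : ∀ k, |t k| ≤ a k := by
    intro k
    have h1 : t k = ∑ ℓ ∈ Finset.range (k + 1),
        ((3 : ℝ) ^ k / 2 ^ (2 * k + 3) * ((k.choose ℓ : ℝ) * (-1 : ℝ) ^ ℓ * (1 / 12 ^ ℓ) *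
          eulerHO (2 * k + 2 * ℓ + 3) n (k + ℓ + x))) := by
      rw [ht_def]; simp only; rw [Finset.mul_sum]
    rw [h1, ha_def]
    simp only
    refine (Finset.abs_sum_le_sum_abs _ _).trans (le_of_eq ?_)
    exact Finset.sum_congr rfl (fun ℓ _ => congrArg abs (by ring))
  have hSt : Summable t := by
    refine Summable.of_norm_bounded hSa (fun k => ?_)
    rw [Real.norm_eq_abs]; exact hta k
  -- telescoping partial sums
  have hFg : PowerSeries.C (R := ℝ) (1/8) * qq^3 * PowerSeries.rescale x (PowerSeries.exp ℝ)
      = PowerSeries.C (R := ℝ) (1/5) * LL x - (PowerSeries.C (R := ℝ) (1/5) * LL x) * ww := by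
    linear_combination master x
  have hpart : ∀ K : ℕ, ∑ k ∈ Finset.range K, t k
      = (n.factorial : ℝ) * (PowerSeries.coeff (R := ℝ) n (PowerSeries.C (R := ℝ) (1/5) * LL x)
          - PowerSeries.coeff (R := ℝ) n ((PowerSeries.C (R := ℝ) (1/5) * LL x) * ww ^ K)) := by
    intro K
    have h1 : ∀ k : ℕ, t k = (n.factorial : ℝ) *
        (PowerSeries.coeff (R := ℝ) n ((PowerSeries.C (R := ℝ) (1/5) * LL x) * ww ^ k)
          - PowerSeries.coeff (R := ℝ) n ((PowerSeries.C (R := ℝ) (1/5) * LL x) * ww ^ (k+1))) := by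
      intro k
      rw [ht k]
      congr 1
      rw [← map_sub]
      congr 1
      rw [hFg]
      ring
    calc ∑ k ∈ Finset.range K, t k
        = ∑ k ∈ Finset.range K, (n.factorial : ℝ) *
          (PowerSeries.coeff (R := ℝ) n ((PowerSeries.C (R := ℝ) (1/5) * LL x) * ww ^ k)
            - PowerSeries.coeff (R := ℝ) n ((PowerSeries.C (R := ℝ) (1/5) * LL x) * ww ^ (k+1))) :=
          Finset.sum_congr rfl (fun k _ => h1 k)
      _ = (n.factorial : ℝ) * ∑ k ∈ Finset.range K,
          (PowerSeries.coeff (R := ℝ) n ((PowerSeries.C (R := ℝ) (1/5) * LL x) * ww ^ k)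
            - PowerSeries.coeff (R := ℝ) n ((PowerSeries.C (R := ℝ) (1/5) * LL x) * ww ^ (k+1))) :=
          (Finset.mul_sum _ _ _).symm
      _ = (n.factorial : ℝ) *
          (PowerSeries.coeff (R := ℝ) n ((PowerSeries.C (R := ℝ) (1/5) * LL x) * ww ^ 0)
            - PowerSeries.coeff (R := ℝ) n ((PowerSeries.C (R := ℝ) (1/5) * LL x) * ww ^ K)) := by
          rw [Finset.sum_range_sub'
            (fun k => PowerSeries.coeff (R := ℝ) n ((PowerSeries.C (R := ℝ) (1/5) * LL x) * ww ^ k))]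
      _ = (n.factorial : ℝ) * (PowerSeries.coeff (R := ℝ) n (PowerSeries.C (R := ℝ) (1/5) * LL x)
          - PowerSeries.coeff (R := ℝ) n ((PowerSeries.C (R := ℝ) (1/5) * LL x) * ww ^ K)) := by
          rw [pow_zero, mul_one]
  -- tail tends to zero
  have hww0 : PowerSeries.constantCoeff (R := ℝ) ww ≠ 0 := by rw [constCoeff_ww]; norm_num
  obtain ⟨D, hD0, hDb⟩ := coeff_mul_pow_le (PowerSeries.C (R := ℝ) (1/5) * LL x) ww n hww0
  have htail : Tendsto (fun K : ℕ =>
      PowerSeries.coeff (R := ℝ) n ((PowerSeries.C (R := ℝ) (1/5) * LL x) * ww ^ K)) atTop (𝓝 0) := by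
    have hb2 : ∀ K : ℕ, ‖PowerSeries.coeff (R := ℝ) n ((PowerSeries.C (R := ℝ) (1/5) * LL x) * ww ^ K)‖
        ≤ D * (((K:ℝ)+1)^n * (11/16)^K) := by
      intro K
      rw [Real.norm_eq_abs]
      have h2 := hDb K
      rw [constCoeff_ww] at h2
      have h3 : |(11/16 : ℝ)| = 11/16 := by norm_num
      rw [h3] at h2
      exact h2.trans_eq (by ring)
    have hb3 : Tendsto (fun K : ℕ => D * (((K:ℝ)+1)^n * (11/16)^K)) atTop (𝓝 0) :=
      ((summable_aux n (by norm_num) (by norm_num)).mul_left D).tendsto_atTop_zero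
    exact squeeze_zero_norm hb2 hb3
  -- identify the tsum
  have hlim1 : Tendsto (fun K : ℕ => ∑ k ∈ Finset.range K, t k) atTop (𝓝 (∑' k, t k)) :=
    hSt.hasSum.tendsto_sum_nat
  have hlim2 : Tendsto (fun K : ℕ => ∑ k ∈ Finset.range K, t k) atTop
      (𝓝 ((n.factorial : ℝ) * (PowerSeries.coeff (R := ℝ) n (PowerSeries.C (R := ℝ) (1/5) * LL x) - 0))) := by
    simp only [hpart]
    exact (tendsto_const_nhds.sub htail).const_mul _
  have htsum : ∑' k, t k = (n.factorial : ℝ) *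
      PowerSeries.coeff (R := ℝ) n (PowerSeries.C (R := ℝ) (1/5) * LL x) := by
    have := tendsto_nhds_unique hlim1 hlim2
    rw [this, sub_zero]
  rw [htsum]
  -- final arithmetic
  have hcg : PowerSeries.coeff (R := ℝ) n (PowerSeries.C (R := ℝ) (1/5) * LL x) = (1/5) * (5^(n+1) *
      (bernoulliPoly (n+1) ((x+2)/5) - bernoulliPoly (n+1) (x/5)) * (1/(n+1).factorial)) := by
    rw [coeff_C_mul, LL, coeff_mk]
  rw [hcg]
  have hfact : ((n+1).factorial : ℝ) = ((n:ℝ)+1) * (n.factorial : ℝ) := by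
    rw [Nat.factorial_succ]; push_cast; ring
  have hfne : ((n.factorial : ℝ)) ≠ 0 := by positivity
  have h5ne : ((5:ℝ)^n) ≠ 0 := by positivity
  rw [hfact, pow_succ]
  field_simp
end
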